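/- With notation as in the context, P − V*V = ∑_{w ∈ E⁰, 1≤i≤−x_w} (p_w − ∑_{e ∈ s⁻¹(w)} s_e s_e*)·E_{m↓(w,i),m↓(w,i)} in M_h(A). -/

import Mathlib

set_option linter.unusedSectionVars false

/-- The range map extended to `E¹ ⊕ E⁰` via the convention `r v = v` for vertices. -/
def rext {V E : Type*} (r : E → V) : E ⊕ V → V := Sum.elim r id

/-- The index set `S↑(x)`. -/
def SUp {V E : Type*} (s : E → V) (x : V → ℤ) : Set ((E ⊕ V) × ℤ) :=
  {q | match q.1 with
       | Sum.inl e => 1 ≤ q.2 ∧ q.2 ≤ -x (s e)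
       | Sum.inr v => 1 ≤ q.2 ∧ q.2 ≤ x v}

/-- The index set `S↓(x)`. -/
def SDn {V E : Type*} (s : E → V) (x : V → ℤ) : Set ((E ⊕ V) × ℤ) :=
  {q | match q.1 with
       | Sum.inl e => 1 ≤ q.2 ∧ q.2 ≤ x (s e)
       | Sum.inr v => 1 ≤ q.2 ∧ q.2 ≤ -x v}

/-- The element `V` of `M_h(A)` associated to a family `{p_v, s_e}` and `x`:
`V = ∑_{w, 1≤i≤x_w, s(e)=w} s_e·E_{m↑(w,i),m↓(e,i)} + ∑_{w, 1≤i≤-x_w, s(e)=w} s_e*·E_{m↑(e,i),m↓(w,i)}`,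
where the first sum is indexed by the pairs `(e,i) ∈ S↓(x)` with `e ∈ E¹` (and `w = s(e)`),
and the second by the pairs `(e,i) ∈ S↑(x)` with `e ∈ E¹` (and `w = s(e)`). -/
noncomputable def Vmat {V E A : Type*} [AddCommMonoid A] [Star A]
    (s : E → V) (x : V → ℤ) (S : E → A) {h : ℕ}
    [Fintype (SUp s x)] [Fintype (SDn s x)]
    (mup : SUp s x ≃ Fin h) (mdn : SDn s x ≃ Fin h) : Matrix (Fin h) (Fin h) A :=
  (∑ q : SDn s x, match q with
    | ⟨(Sum.inl e, i), hq⟩ =>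
        Matrix.single (mup ⟨(Sum.inr (s e), i), hq⟩) (mdn ⟨(Sum.inl e, i), hq⟩) (S e)
    | ⟨(Sum.inr _, _), _⟩ => 0)
  + (∑ q : SUp s x, match q with
    | ⟨(Sum.inl e, i), hq⟩ =>
        Matrix.single (mup ⟨(Sum.inl e, i), hq⟩) (mdn ⟨(Sum.inr (s e), i), hq⟩) (star (S e))
    | ⟨(Sum.inr _, _), _⟩ => 0)

/-- The element `P` of `M_h(A)`:
`P = ∑_{w, 1≤i≤x_w} p_w·E_{m↑(w,i),m↑(w,i)} + ∑_{w, 1≤i≤-x_w, s(e)=w} p_{r(e)}·E_{m↑(e,i),m↑(e,i)}`,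
written as a single sum over `S↑(x)` using the convention `r v = v`. -/
noncomputable def Pmat {V E A : Type*} [AddCommMonoid A]
    (r s : E → V) (x : V → ℤ) (p : V → A) {h : ℕ}
    [Fintype (SUp s x)]
    (mup : SUp s x ≃ Fin h) : Matrix (Fin h) (Fin h) A :=
  ∑ q : SUp s x, Matrix.single (mup q) (mup q) (p (rext r q.1.1))

lemma star_stdBasisMatrix' {n : Type*} {A : Type*} [DecidableEq n] [AddMonoid A] [StarAddMonoid A]
    (i j : n) (c : A) :
    star (Matrix.single i j c) = Matrix.single j i (star c) := by
  ext a b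
  simp only [Matrix.star_apply, Matrix.single, Matrix.of_apply]
  by_cases h1 : i = b <;> by_cases h2 : j = a <;> simp [h1, h2, and_comm]

lemma stdBasisMatrix_sub' {n : Type*} {A : Type*} [DecidableEq n] [AddGroup A]
    (i j : n) (a b : A) :
    Matrix.single i j (a - b) = Matrix.single i j a - Matrix.single i j b := by
  ext a' b'
  simp only [Matrix.single, Matrix.of_apply, Matrix.sub_apply]
  split_ifs <;> simp

section aux
variable {V E A : Type*} [NonUnitalCStarAlgebra A]
    (r : E → V) (s : E → V) (x : V → ℤ) (p : V → A) (S : E → A) {h : ℕ}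
    [Fintype (SUp s x)] [Fintype (SDn s x)]
    (mup : SUp s x ≃ Fin h) (mdn : SDn s x ≃ Fin h)

noncomputable def auxf1 (q : SDn s x) : Matrix (Fin h) (Fin h) A :=
  match q with
  | ⟨(Sum.inl e, i), hq⟩ =>
      Matrix.single (mup ⟨(Sum.inr (s e), i), hq⟩) (mdn ⟨(Sum.inl e, i), hq⟩) (S e)
  | ⟨(Sum.inr _, _), _⟩ => 0

noncomputable def auxf2 (q : SUp s x) : Matrix (Fin h) (Fin h) A :=
  match q with
  | ⟨(Sum.inl e, i), hq⟩ =>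
      Matrix.single (mup ⟨(Sum.inl e, i), hq⟩) (mdn ⟨(Sum.inr (s e), i), hq⟩) (star (S e))
  | ⟨(Sum.inr _, _), _⟩ => 0

noncomputable def auxg1 (q : SDn s x) : Matrix (Fin h) (Fin h) A :=
  match q with
  | ⟨(Sum.inl e, i), hq⟩ =>
      Matrix.single (mdn ⟨(Sum.inl e, i), hq⟩) (mup ⟨(Sum.inr (s e), i), hq⟩) (star (S e))
  | ⟨(Sum.inr _, _), _⟩ => 0

noncomputable def auxg2 (q : SUp s x) : Matrix (Fin h) (Fin h) A :=
  match q with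
  | ⟨(Sum.inl e, i), hq⟩ =>
      Matrix.single (mdn ⟨(Sum.inr (s e), i), hq⟩) (mup ⟨(Sum.inl e, i), hq⟩) (S e)
  | ⟨(Sum.inr _, _), _⟩ => 0

noncomputable def auxD1 (q : SDn s x) : Matrix (Fin h) (Fin h) A :=
  match q with
  | ⟨(Sum.inl e, i), hq⟩ =>
      Matrix.single (mdn ⟨(Sum.inl e, i), hq⟩) (mdn ⟨(Sum.inl e, i), hq⟩) (p (r e))
  | ⟨(Sum.inr _, _), _⟩ => 0

noncomputable def auxG (q : SUp s x) : Matrix (Fin h) (Fin h) A :=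
  match q with
  | ⟨(Sum.inl e, i), hq⟩ =>
      Matrix.single (mdn ⟨(Sum.inr (s e), i), hq⟩) (mdn ⟨(Sum.inr (s e), i), hq⟩)
        (S e * star (S e))
  | ⟨(Sum.inr _, _), _⟩ => 0

noncomputable def auxK (q : SDn s x) : Matrix (Fin h) (Fin h) A :=
  Matrix.single (mdn q) (mdn q)
    (match q.1.1 with
     | Sum.inl _ => 0
     | Sum.inr w => ∑ᶠ e ∈ {e | s e = w}, S e * star (S e))

open Classical in
noncomputable def auxCval (s : E → V) (S : E → A) (z : (E ⊕ V) × ℤ) (y : (E ⊕ V) × ℤ) : A :=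
  match y.1 with
  | Sum.inl e => if ((Sum.inr (s e) : E ⊕ V), y.2) = z then S e * star (S e) else 0
  | Sum.inr _ => 0

lemma Vmat_eq : Vmat s x S mup mdn = (∑ q : SDn s x, auxf1 s x S mup mdn q)
    + (∑ q : SUp s x, auxf2 s x S mup mdn q) := rfl

lemma star_Vmat : star (Vmat s x S mup mdn) = (∑ q : SDn s x, auxg1 s x S mup mdn q)
    + (∑ q : SUp s x, auxg2 s x S mup mdn q) := by
  rw [Vmat_eq, star_add, star_sum, star_sum]
  congr 1
  · refine Finset.sum_congr rfl fun q _ => ?_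
    rcases q with ⟨⟨e | v, i⟩, hq⟩
    · rw [auxf1, auxg1, star_stdBasisMatrix']
    · rw [auxf1, auxg1, star_zero]
  · refine Finset.sum_congr rfl fun q _ => ?_
    rcases q with ⟨⟨e | v, i⟩, hq⟩
    · rw [auxf2, auxg2, star_stdBasisMatrix', star_star]
    · rw [auxf2, auxg2, star_zero]

lemma cross12 : (∑ q : SDn s x, auxg1 s x S mup mdn q) * (∑ q : SUp s x, auxf2 s x S mup mdn q)
    = 0 := by
  rw [Finset.sum_mul_sum]
  refine Finset.sum_eq_zero fun q _ => Finset.sum_eq_zero fun q' _ => ?_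
  rcases q with ⟨⟨e | v, i⟩, hq⟩
  · rcases q' with ⟨⟨f | w, j⟩, hq'⟩
    · rw [auxg1, auxf2]
      apply Matrix.single_mul_single_of_ne
      intro hc
      have h3 := Subtype.ext_iff.mp (mup.injective hc)
      simp [Prod.ext_iff] at h3
    · rw [auxf2, mul_zero]
  · rw [auxg1, zero_mul]

lemma cross21 : (∑ q : SUp s x, auxg2 s x S mup mdn q) * (∑ q : SDn s x, auxf1 s x S mup mdn q)
    = 0 := by
  rw [Finset.sum_mul_sum]
  refine Finset.sum_eq_zero fun q _ => Finset.sum_eq_zero fun q' _ => ?_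
  rcases q with ⟨⟨e | v, i⟩, hq⟩
  · rcases q' with ⟨⟨f | w, j⟩, hq'⟩
    · rw [auxg2, auxf1]
      apply Matrix.single_mul_single_of_ne
      intro hc
      have h3 := Subtype.ext_iff.mp (mup.injective hc)
      simp [Prod.ext_iff] at h3
    · rw [auxf1, mul_zero]
  · rw [auxg2, zero_mul]

lemma g1f1 (hCK1 : ∀ e, star (S e) * S e = p (r e))
    (hS_orth : ∀ e f, e ≠ f → star (S e) * S f = 0) :
    (∑ q : SDn s x, auxg1 s x S mup mdn q) * (∑ q : SDn s x, auxf1 s x S mup mdn q)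
      = ∑ q : SDn s x, auxD1 r s x p mdn q := by
  rw [Finset.sum_mul_sum]
  refine Finset.sum_congr rfl fun q _ => ?_
  rcases q with ⟨⟨e | v, i⟩, hq⟩
  · rw [auxD1]
    rw [Finset.sum_eq_single_of_mem ⟨(Sum.inl e, i), hq⟩ (Finset.mem_univ _) ?side]
    · rw [auxg1, auxf1, Matrix.single_mul_single_same, hCK1]
    case side =>
      intro q' _ hne
      rcases q' with ⟨⟨f | w, j⟩, hq'⟩
      · rw [auxg1, auxf1]
        by_cases hval : s e = s f ∧ i = j
        · obtain ⟨hse, rfl⟩ := hval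
          have hX : (⟨(Sum.inr (s e), i), hq⟩ : SUp s x) = ⟨(Sum.inr (s f), i), hq'⟩ :=
            Subtype.ext (by show ((Sum.inr (s e) : E ⊕ V), i) = (Sum.inr (s f), i); rw [hse])
          rw [hX, Matrix.single_mul_single_same]
          have hef : e ≠ f := by
            rintro rfl
            exact hne (Subtype.ext rfl)
          rw [hS_orth e f hef, Matrix.single_zero]
        · apply Matrix.single_mul_single_of_ne
          intro hc
          have h3 := Subtype.ext_iff.mp (mup.injective hc)
          apply hval
          refine ⟨Sum.inr.inj (congrArg Prod.fst h3), congrArg Prod.snd h3⟩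
      · rw [auxf1, mul_zero]
  · rw [auxD1]
    refine Finset.sum_eq_zero fun q' _ => ?_
    rw [auxg1, zero_mul]

lemma g2f2 :
    (∑ q : SUp s x, auxg2 s x S mup mdn q) * (∑ q : SUp s x, auxf2 s x S mup mdn q)
      = ∑ q : SUp s x, auxG s x S mdn q := by
  rw [Finset.sum_mul_sum]
  refine Finset.sum_congr rfl fun q _ => ?_
  rcases q with ⟨⟨e | v, i⟩, hq⟩
  · rw [auxG]
    rw [Finset.sum_eq_single_of_mem ⟨(Sum.inl e, i), hq⟩ (Finset.mem_univ _) ?side2]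
    · rw [auxg2, auxf2, Matrix.single_mul_single_same]
    case side2 =>
      intro q' _ hne
      rcases q' with ⟨⟨f | w, j⟩, hq'⟩
      · rw [auxg2, auxf2]
        apply Matrix.single_mul_single_of_ne
        intro hc
        exact hne (mup.injective hc).symm
      · rw [auxf2, mul_zero]
  · rw [auxG]
    refine Finset.sum_eq_zero fun q' _ => ?_
    rw [auxg2, zero_mul]

lemma Pmat_reindex
    (hcomp : ∀ (q : SUp s x) (q' : SDn s x), mup q = mdn q' → rext r q.1.1 = rext r q'.1.1) :
    Pmat r s x p mup
      = ∑ q : SDn s x, Matrix.single (mdn q) (mdn q) (p (rext r q.1.1)) := by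
  refine (Fintype.sum_equiv (mdn.trans mup.symm)
    (fun q => Matrix.single (mdn q) (mdn q) (p (rext r q.1.1)))
    (fun q => Matrix.single (mup q) (mup q) (p (rext r q.1.1))) (fun q => ?_)).symm
  have h1 : mup ((mdn.trans mup.symm) q) = mdn q := by simp
  rw [h1, hcomp ((mdn.trans mup.symm) q) q h1]

lemma sumG_eq_sumK (hemit : ∀ v, x v ≠ 0 → {e | s e = v}.Finite) :
    ∑ q : SUp s x, auxG s x S mdn q = ∑ q : SDn s x, auxK s x S mdn q := by
  classical
  ext a b
  rw [Matrix.sum_apply, Matrix.sum_apply]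
  by_cases hab : a = b
  · subst hab
    have hRHS : ∑ q : SDn s x, (auxK s x S mdn q) a a
        = (match (mdn.symm a).1.1 with
           | Sum.inl _ => (0 : A)
           | Sum.inr w => ∑ᶠ e ∈ {e | s e = w}, S e * star (S e)) := by
      rw [Finset.sum_eq_single_of_mem (mdn.symm a) (Finset.mem_univ _)]
      · rw [auxK, Equiv.apply_symm_apply, Matrix.single_apply_same]
      · intro q' _ hne
        rw [auxK]
        apply Matrix.single_apply_of_ne
        rintro ⟨h1, -⟩
        exact hne (by rw [← h1, Equiv.symm_apply_apply])
    have hL : ∀ q : SUp s x, (auxG s x S mdn q) a a = auxCval s S (mdn.symm a).1 q.1 := by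
      intro q
      rcases q with ⟨⟨e | v, i⟩, hq⟩
      · simp only [auxG, auxCval]
        by_cases hXq0 : (⟨(Sum.inr (s e), i), hq⟩ : SDn s x) = mdn.symm a
        · rw [hXq0, Equiv.apply_symm_apply, Matrix.single_apply_same,
            if_pos (congrArg Subtype.val hXq0)]
        · rw [if_neg (fun hc => hXq0 (Subtype.ext hc)), Matrix.single_apply_of_ne]
          rintro ⟨h1, -⟩
          exact hXq0 (by rw [← h1, Equiv.symm_apply_apply])
      · simp only [auxG, auxCval, Matrix.zero_apply]
    rw [hRHS, Finset.sum_congr rfl (fun q _ => hL q),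
      (Finset.sum_subtype ((SUp s x).toFinset) (fun y => Set.mem_toFinset)
        (auxCval s S (mdn.symm a).1)).symm]
    rcases hsplit : mdn.symm a with ⟨⟨f0 | w, j⟩, hmem⟩
    · show ∑ y ∈ (SUp s x).toFinset, auxCval s S (Sum.inl f0, j) y = 0
      refine Finset.sum_eq_zero fun y hy => ?_
      rcases y with ⟨e | v, i⟩
      · simp only [auxCval]
        rw [if_neg]
        intro hc
        exact absurd (congrArg Prod.fst hc) (by simp)
      · simp only [auxCval]
    · show ∑ y ∈ (SUp s x).toFinset, auxCval s S (Sum.inr w, j) y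
        = ∑ᶠ e ∈ {e | s e = w}, S e * star (S e)
      have hb : 1 ≤ j ∧ j ≤ -x w := hmem
      have hxw : x w ≠ 0 := by omega
      have hfin := hemit w hxw
      rw [← Set.Finite.coe_toFinset hfin, finsum_mem_coe_finset]
      have hsub : hfin.toFinset.image (fun e => ((Sum.inl e : E ⊕ V), j))
          ⊆ (SUp s x).toFinset := by
        intro y hy
        rw [Finset.mem_image] at hy
        obtain ⟨e, he, rfl⟩ := hy
        rw [Set.mem_toFinset]
        have hse : s e = w := (Set.Finite.mem_toFinset hfin).mp he
        show 1 ≤ j ∧ j ≤ -x (s e)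
        rw [hse]
        exact hb
      rw [← Finset.sum_subset hsub ?vanish]
      · rw [Finset.sum_image ?inj]
        · refine Finset.sum_congr rfl fun e he => ?_
          have hse : s e = w := (Set.Finite.mem_toFinset hfin).mp he
          simp only [auxCval]
          rw [if_pos (show ((Sum.inr (s e) : E ⊕ V), j) = (Sum.inr w, j) by rw [hse])]
        case inj =>
          intro e _ f _ hef
          simpa using hef
      case vanish =>
        intro y hy hyt
        rcases y with ⟨e | v, i⟩
        · simp only [auxCval]
          rw [if_neg]
          intro hc
          have hse : s e = w := Sum.inr.inj (congrArg Prod.fst hc)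
          have hij : i = j := congrArg Prod.snd hc
          subst hij
          exact hyt (Finset.mem_image.mpr ⟨e, (Set.Finite.mem_toFinset hfin).mpr hse, rfl⟩)
        · simp only [auxCval]
  · rw [Finset.sum_eq_zero, Finset.sum_eq_zero]
    · intro q _
      rw [auxK]
      exact Matrix.single_apply_of_ne _ _ _ _ _ (fun hc => hab (hc.1.symm.trans hc.2))
    · intro q _
      rcases q with ⟨⟨e | v, i⟩, hq⟩
      · rw [auxG]
        exact Matrix.single_apply_of_ne _ _ _ _ _ (fun hc => hab (hc.1.symm.trans hc.2))
      · rw [auxG, Matrix.zero_apply]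

end aux

theorem stmt16 {V E A : Type*} [Countable V] [Countable E] [NonUnitalCStarAlgebra A]
    (r s : E → V) (p : V → A) (S : E → A)
    (hp_star : ∀ v, star (p v) = p v)
    (hp_idem : ∀ v, p v * p v = p v)
    (hp_orth : ∀ v w, v ≠ w → p v * p w = 0)
    (hCK1 : ∀ e, star (S e) * S e = p (r e))
    (hS_orth : ∀ e f, e ≠ f → star (S e) * S f = 0)
    (hCK3 : ∀ e, p (s e) * S e = S e)
    (x : V → ℤ) (hsupp : {v | x v ≠ 0}.Finite)
    (hemit : ∀ v, x v ≠ 0 → {e | s e = v}.Finite)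
    (hker : ∀ v, ∑ᶠ e ∈ {e | r e = v}, x (s e) = x v)
    {h : ℕ} [Fintype (SUp s x)] [Fintype (SDn s x)]
    (mup : SUp s x ≃ Fin h) (mdn : SDn s x ≃ Fin h)
    (hcomp : ∀ (q : SUp s x) (q' : SDn s x), mup q = mdn q' → rext r q.1.1 = rext r q'.1.1) :
    Pmat r s x p mup - star (Vmat s x S mup mdn) * Vmat s x S mup mdn =
      ∑ q : SDn s x, Matrix.single (mdn q) (mdn q)
        (match q.1.1 with
         | Sum.inl _ => (0 : A)
         | Sum.inr w => p w - ∑ᶠ e ∈ {e | s e = w}, S e * star (S e)) := by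
  have hprod : star (Vmat s x S mup mdn) * Vmat s x S mup mdn
      = (∑ q : SDn s x, auxD1 r s x p mdn q) + (∑ q : SUp s x, auxG s x S mdn q) := by
    rw [star_Vmat, Vmat_eq, add_mul, mul_add, mul_add, cross12, cross21,
      g1f1 r s x p S mup mdn hCK1 hS_orth, g2f2, add_zero, zero_add]
  rw [hprod, sumG_eq_sumK s x S mdn hemit, Pmat_reindex r s x p mup mdn hcomp,
    ← Finset.sum_add_distrib, ← Finset.sum_sub_distrib]
  refine Finset.sum_congr rfl fun q _ => ?_
  rcases q with ⟨⟨e | w, i⟩, hq⟩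
  · simp only [auxD1, auxK]
    show Matrix.single (mdn ⟨(Sum.inl e, i), hq⟩) (mdn ⟨(Sum.inl e, i), hq⟩) (p (r e))
        - (Matrix.single (mdn ⟨(Sum.inl e, i), hq⟩) (mdn ⟨(Sum.inl e, i), hq⟩) (p (r e))
          + Matrix.single (mdn ⟨(Sum.inl e, i), hq⟩) (mdn ⟨(Sum.inl e, i), hq⟩) (0 : A))
      = Matrix.single (mdn ⟨(Sum.inl e, i), hq⟩) (mdn ⟨(Sum.inl e, i), hq⟩) (0 : A)
    rw [Matrix.single_zero, add_zero, sub_self]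
  · simp only [auxD1, auxK]
    show Matrix.single (mdn ⟨(Sum.inr w, i), hq⟩) (mdn ⟨(Sum.inr w, i), hq⟩) (p w)
        - ((0 : Matrix (Fin h) (Fin h) A)
          + Matrix.single (mdn ⟨(Sum.inr w, i), hq⟩) (mdn ⟨(Sum.inr w, i), hq⟩)
              (∑ᶠ e ∈ {e | s e = w}, S e * star (S e)))
      = Matrix.single (mdn ⟨(Sum.inr w, i), hq⟩) (mdn ⟨(Sum.inr w, i), hq⟩)
          (p w - ∑ᶠ e ∈ {e | s e = w}, S e * star (S e))
    rw [zero_add, stdBasisMatrix_sub']
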